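/- Let B := ℂ[X, Y, Z]/(X²Y − Z²), with x, y, z the images of X, Y, Z. The ℂ-derivation 2Z ∂/∂Y + X² ∂/∂Z of ℂ[X, Y, Z] kills X²Y − Z² and hence induces a locally nilpotent ℂ-derivation D on B. For every α ∈ ℂ there exists w ∈ B with D(w) ∉ (x − α) (i.e., D is nonzero modulo every ideal (x − α)); nevertheless, B/(x) is not an integral domain. -/

import Mathlib

/-- A derivation is locally nilpotent if every element is killed by some iterate. -/
def Derivation.IsLocallyNilpotent {k A : Type*} [CommRing k] [CommRing A] [Algebra k A]
    (D : Derivation k A A) : Prop :=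
  ∀ a : A, ∃ m : ℕ, 1 ≤ m ∧ (fun x => D x)^[m] a = 0

open Finset in
theorem aux_iter_leibniz {k A : Type*} [CommRing k] [CommRing A] [Algebra k A]
    (D : Derivation k A A) {n : ℕ} (p q : A) :
    (fun x => D x)^[n] (p * q) =
      ∑ i ∈ range n.succ, (n.choose i • ((fun x => D x)^[n - i] p * (fun x => D x)^[i] q)) := by
  set f : A → A := fun x => D x with hf
  have hmul : ∀ a b : A, f (a * b) = f a * b + a * f b := by
    intro a b
    simp only [hf, Derivation.leibniz, smul_eq_mul]
    ring
  induction n with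
  | zero => simp [Finset.range]
  | succ n IH =>
    calc
      f^[n + 1] (p * q) =
          f (∑ i ∈ range n.succ, n.choose i • (f^[n - i] p * f^[i] q)) := by
        rw [Function.iterate_succ_apply', IH]
      _ = (∑ i ∈ range n.succ, n.choose i • (f^[n - i + 1] p * f^[i] q)) +
          ∑ i ∈ range n.succ, n.choose i • (f^[n - i] p * f^[i + 1] q) := by
        have hs : ∀ s : Finset ℕ, ∀ g : ℕ → A, f (∑ i ∈ s, g i) = ∑ i ∈ s, f (g i) := by
          intro s g; simp [hf]
        rw [hs]
        have hn : ∀ (m : ℕ) (a : A), f (m • a) = m • f a := by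
          intro m a; simp [hf]
        simp_rw [hn, hmul, Function.iterate_succ_apply', smul_add, sum_add_distrib]
      _ = (∑ i ∈ range n.succ, n.choose i.succ • (f^[n - i] p * f^[i + 1] q)) +
              1 • (f^[n + 1] p * f^[0] q) +
            ∑ i ∈ range n.succ, n.choose i • (f^[n - i] p * f^[i + 1] q) := ?_
      _ = ((∑ i ∈ range n.succ, n.choose i • (f^[n - i] p * f^[i + 1] q)) +
              ∑ i ∈ range n.succ, n.choose i.succ • (f^[n - i] p * f^[i + 1] q)) +
            1 • (f^[n + 1] p * f^[0] q) := by
        rw [add_comm, add_assoc]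
      _ = (∑ i ∈ range n.succ,
              (n + 1).choose (i + 1) • (f^[n + 1 - (i + 1)] p * f^[i + 1] q)) +
            1 • (f^[n + 1] p * f^[0] q) := by
        simp_rw [Nat.choose_succ_succ, Nat.succ_sub_succ, add_smul, sum_add_distrib]
      _ = ∑ i ∈ range n.succ.succ, n.succ.choose i • (f^[n.succ - i] p * f^[i] q) := by
        rw [sum_range_succ' _ n.succ, Nat.choose_zero_right, tsub_zero]
    congr
    refine (sum_range_succ' _ _).trans (congr_arg₂ (· + ·) ?_ ?_)
    · rw [sum_range_succ, Nat.choose_succ_self, zero_smul, add_zero]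
      refine sum_congr rfl fun i hi => ?_
      rw [mem_range] at hi
      congr
      omega
    · rw [Nat.choose_zero_right, tsub_zero]

theorem aux_iter_add {k A : Type*} [CommRing k] [CommRing A] [Algebra k A]
    (D : Derivation k A A) (m : ℕ) (p q : A) :
    (fun x => D x)^[m] (p + q) = (fun x => D x)^[m] p + (fun x => D x)^[m] q := by
  induction m with
  | zero => simp
  | succ m IH => simp [Function.iterate_succ_apply', IH]

theorem aux_mono {k A : Type*} [CommRing k] [CommRing A] [Algebra k A]
    (D : Derivation k A A) {m n : ℕ} {p : A} (h : (fun x => D x)^[m] p = 0) (hmn : m ≤ n) :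
    (fun x => D x)^[n] p = 0 := by
  have hz : ∀ j : ℕ, (fun x => D x)^[j] (0 : A) = 0 := by
    intro j
    induction j with
    | zero => simp
    | succ j IH => simp [Function.iterate_succ_apply', IH]
  have : n = (n - m) + m := by omega
  rw [this, Function.iterate_add_apply, h, hz]

set_option maxHeartbeats 1000000 in
set_option maxRecDepth 8000 in
set_option synthInstance.maxHeartbeats 400000 in
open MvPolynomial in
theorem statement17
    (G : MvPolynomial (Fin 3) ℂ)
    (hG : G = (X 0) ^ 2 * X 1 - (X 2) ^ 2)
    (Dt : Derivation ℂ (MvPolynomial (Fin 3) ℂ) (MvPolynomial (Fin 3) ℂ))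
    (hDt : Dt = ((2 : MvPolynomial (Fin 3) ℂ) * X 2) • pderiv (1 : Fin 3) +
      ((X 0 : MvPolynomial (Fin 3) ℂ) ^ 2) • pderiv (2 : Fin 3))
    (x : MvPolynomial (Fin 3) ℂ ⧸ Ideal.span {G})
    (hx : x = Ideal.Quotient.mk (Ideal.span {G}) (X 0)) :
    Dt G = 0 ∧
    ∃ D : Derivation ℂ (MvPolynomial (Fin 3) ℂ ⧸ Ideal.span {G})
        (MvPolynomial (Fin 3) ℂ ⧸ Ideal.span {G}),
      (∀ r : MvPolynomial (Fin 3) ℂ,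
        D (Ideal.Quotient.mk (Ideal.span {G}) r) = Ideal.Quotient.mk (Ideal.span {G}) (Dt r)) ∧
      D.IsLocallyNilpotent ∧
      (∀ α : ℂ, ∃ w, D w ∉
        Ideal.span {x - algebraMap ℂ (MvPolynomial (Fin 3) ℂ ⧸ Ideal.span {G}) α}) ∧
      ¬ IsDomain ((MvPolynomial (Fin 3) ℂ ⧸ Ideal.span {G}) ⧸ Ideal.span {x}) := by
  have h2C : (2 : MvPolynomial (Fin 3) ℂ) = C 2 := by rw [map_ofNat]
  -- Dt kills G
  have hDtG : Dt G = 0 := by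
    rw [hG, hDt]
    simp [pderiv_X, Pi.single_apply]
    ring
  -- nilpotency on generators
  have h3 : ∀ j : Fin 3, (fun p => Dt p)^[3] (X j) = 0 := by
    intro j
    rw [hDt]
    fin_cases j <;>
      · simp only [Function.iterate_succ_apply, Function.iterate_zero_apply]
        simp [h2C, pderiv_X, pderiv_C, Pi.single_apply]
  -- local nilpotency of Dt
  have hln : ∀ p : MvPolynomial (Fin 3) ℂ, ∃ m : ℕ, 1 ≤ m ∧ (fun p => Dt p)^[m] p = 0 := by
    intro p
    induction p using MvPolynomial.induction_on with
    | C a =>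
      refine ⟨1, le_refl 1, ?_⟩
      simp [hDt, h2C, pderiv_C]
    | add p q hp hq =>
      obtain ⟨m, hm1, hm⟩ := hp
      obtain ⟨n, _, hn⟩ := hq
      exact ⟨max m n, le_trans hm1 (le_max_left _ _), by
        rw [aux_iter_add, aux_mono Dt hm (le_max_left _ _),
          aux_mono Dt hn (le_max_right _ _), add_zero]⟩
    | mul_X p j hp =>
      obtain ⟨m, _, hm⟩ := hp
      refine ⟨m + 3, by omega, ?_⟩
      rw [aux_iter_leibniz]
      apply Finset.sum_eq_zero
      intro i hi
      rw [Finset.mem_range] at hi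
      rcases le_or_gt i 2 with h | h
      · rw [aux_mono Dt hm (by omega : m ≤ m + 3 - i), zero_mul, smul_zero]
      · rw [aux_mono Dt (h3 j) (by omega : 3 ≤ i), mul_zero, smul_zero]
  -- the induced derivation on the quotient
  have hker : ∀ r ∈ (Ideal.span {G}), Ideal.Quotient.mk (Ideal.span {G}) (Dt r) = 0 := by
    intro r hr
    rw [Ideal.mem_span_singleton'] at hr
    obtain ⟨a, rfl⟩ := hr
    rw [Ideal.Quotient.eq_zero_iff_mem]
    have : Dt (a * G) = G * Dt a := by
      rw [Derivation.leibniz, hDtG, smul_eq_mul, smul_eq_mul]; ring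
    rw [this]
    exact Ideal.mul_mem_right _ _ (Ideal.subset_span rfl)
  set L0 : MvPolynomial (Fin 3) ℂ →ₗ[ℂ] (MvPolynomial (Fin 3) ℂ ⧸ (Ideal.span {G})) :=
    (Ideal.Quotient.mkₐ ℂ (Ideal.span {G})).toLinearMap.comp (Dt : MvPolynomial (Fin 3) ℂ →ₗ[ℂ] MvPolynomial (Fin 3) ℂ) with hL0
  have hle : (Ideal.span {G}).restrictScalars ℂ ≤ LinearMap.ker L0 := fun r hr => hker r hr
  set L1 := Submodule.liftQ ((Ideal.span {G}).restrictScalars ℂ) L0 hle with hL1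
  set E := Submodule.Quotient.restrictScalarsEquiv ℂ (Ideal.span {G}) with hE
  set Dlin : (MvPolynomial (Fin 3) ℂ ⧸ (Ideal.span {G})) →ₗ[ℂ] (MvPolynomial (Fin 3) ℂ ⧸ (Ideal.span {G})) := L1.comp (E.symm : (MvPolynomial (Fin 3) ℂ ⧸ (Ideal.span {G})) →ₗ[ℂ] _) with hDlin
  have key : ∀ r : MvPolynomial (Fin 3) ℂ, Dlin (Ideal.Quotient.mk (Ideal.span {G}) r) = Ideal.Quotient.mk (Ideal.span {G}) (Dt r) := by
    intro r
    show L1 (E.symm (Ideal.Quotient.mk (Ideal.span {G}) r)) = _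
    rw [show Ideal.Quotient.mk (Ideal.span {G}) r = Submodule.Quotient.mk r from rfl, hE,
      Submodule.Quotient.restrictScalarsEquiv_symm_mk, hL1, Submodule.liftQ_apply]
    rfl
  set D : Derivation ℂ (MvPolynomial (Fin 3) ℂ ⧸ (Ideal.span {G})) (MvPolynomial (Fin 3) ℂ ⧸ (Ideal.span {G})) :=
    { toLinearMap := Dlin
      map_one_eq_zero' := by
        have h := key 1
        rw [map_one, Derivation.map_one_eq_zero, map_zero] at h
        exact h
      leibniz' := by
        intro a b
        obtain ⟨p, rfl⟩ := Ideal.Quotient.mk_surjective (I := Ideal.span {G}) a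
        obtain ⟨q, rfl⟩ := Ideal.Quotient.mk_surjective (I := Ideal.span {G}) b
        show Dlin _ = _ • Dlin _ + _ • Dlin _
        rw [← map_mul, key, key, key, Derivation.leibniz, map_add, smul_eq_mul, smul_eq_mul,
          map_mul, map_mul, smul_eq_mul, smul_eq_mul] } with hD
  have hDapp : ∀ r : MvPolynomial (Fin 3) ℂ, D (Ideal.Quotient.mk (Ideal.span {G}) r) = Ideal.Quotient.mk (Ideal.span {G}) (Dt r) := key
  refine ⟨hDtG, D, hDapp, ?_, ?_, ?_⟩
  · -- local nilpotency of D
    intro a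
    obtain ⟨r, rfl⟩ := Ideal.Quotient.mk_surjective (I := Ideal.span {G}) a
    obtain ⟨m, hm1, hm⟩ := hln r
    refine ⟨m, hm1, ?_⟩
    have hiter : ∀ (n : ℕ) (s : MvPolynomial (Fin 3) ℂ),
        (fun b => D b)^[n] (Ideal.Quotient.mk (Ideal.span {G}) s) =
          Ideal.Quotient.mk (Ideal.span {G}) ((fun p => Dt p)^[n] s) := by
      intro n
      induction n with
      | zero => intro s; simp
      | succ n IH =>
        intro s
        rw [Function.iterate_succ_apply, Function.iterate_succ_apply]
        show (fun b => D b)^[n] (D (Ideal.Quotient.mk (Ideal.span {G}) s)) = _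
        rw [hDapp, IH]
    rw [hiter, hm, map_zero]
  · -- nontriviality mod (x - α)
    intro α
    refine ⟨Ideal.Quotient.mk (Ideal.span {G}) (X 1), ?_⟩
    have hDw : D (Ideal.Quotient.mk (Ideal.span {G}) (X 1)) = Ideal.Quotient.mk (Ideal.span {G}) (2 * X 2) := by
      rw [hDapp]
      congr 1
      rw [hDt]
      simp [pderiv_X, Pi.single_apply]
    rw [hDw]
    -- evaluation to dual numbers
    set z : DualNumber ℂ := algebraMap ℂ _ α + (if α = 0 then DualNumber.eps else 0) with hz
    set f : Fin 3 → DualNumber ℂ := ![algebraMap ℂ _ α, 1, z] with hf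
    have hzsq : z * z = algebraMap ℂ (DualNumber ℂ) α * algebraMap ℂ _ α := by
      rcases eq_or_ne α 0 with h | h
      · simp [hz, h, DualNumber.eps_mul_eps]
      · simp [hz, h]
    have hφG : (aeval f) G = 0 := by
      rw [hG]
      simp only [map_sub, map_mul, map_pow, aeval_X]
      rw [hf]
      simp only [Matrix.cons_val_zero, Matrix.cons_val_one, Matrix.head_cons,
        Matrix.cons_val_two, Matrix.tail_cons]
      rw [sq, sq, hzsq]
      rw [← map_mul]
      ring_nf
    have hvan : ∀ r ∈ (Ideal.span {G}), (aeval f : MvPolynomial (Fin 3) ℂ →ₐ[ℂ] DualNumber ℂ) r = 0 := by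
      intro r hr
      rw [Ideal.mem_span_singleton'] at hr
      obtain ⟨a, rfl⟩ := hr
      rw [map_mul, hφG, mul_zero]
    set φ : (MvPolynomial (Fin 3) ℂ ⧸ (Ideal.span {G})) →+* DualNumber ℂ :=
      Ideal.Quotient.lift (Ideal.span {G}) (aeval f : MvPolynomial (Fin 3) ℂ →ₐ[ℂ] DualNumber ℂ).toRingHom hvan with hφ
    have hφmk : ∀ r : MvPolynomial (Fin 3) ℂ, φ (Ideal.Quotient.mk (Ideal.span {G}) r) = aeval f r := fun r => rfl
    have hφgen : φ (x - algebraMap ℂ (MvPolynomial (Fin 3) ℂ ⧸ (Ideal.span {G})) α) = 0 := by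
      have halg : algebraMap ℂ (MvPolynomial (Fin 3) ℂ ⧸ (Ideal.span {G})) α = Ideal.Quotient.mk (Ideal.span {G}) (C α) := by
        rw [IsScalarTower.algebraMap_apply ℂ (MvPolynomial (Fin 3) ℂ) (MvPolynomial (Fin 3) ℂ ⧸ (Ideal.span {G})), Ideal.Quotient.algebraMap_eq]
        rfl
      rw [hx, halg, ← map_sub, hφmk]
      simp [hf]
    intro hmem
    rw [Ideal.mem_span_singleton'] at hmem
    obtain ⟨c, hc⟩ := hmem
    have h0 : φ (Ideal.Quotient.mk (Ideal.span {G}) (2 * X 2)) = 0 := by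
      rw [← hc, map_mul, hφgen, mul_zero]
    rw [hφmk] at h0
    rw [map_mul, aeval_X, hf] at h0
    simp only [Matrix.cons_val_two, Matrix.tail_cons, Matrix.head_cons, map_ofNat] at h0
    have h2dn : (2 : DualNumber ℂ) = TrivSqZeroExt.inl (2 : ℂ) :=
      (map_ofNat (TrivSqZeroExt.inlHom ℂ ℂ) 2).symm
    rcases eq_or_ne α 0 with h | h
    · rw [hz, h, map_zero, zero_add, if_pos rfl, h2dn] at h0
      have hsnd := congrArg TrivSqZeroExt.snd h0
      simp [TrivSqZeroExt.snd_mul] at hsnd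
    · rw [hz, if_neg h, add_zero, h2dn] at h0
      have hfst := congrArg TrivSqZeroExt.fst h0
      simp only [TrivSqZeroExt.fst_mul, TrivSqZeroExt.fst_inl, TrivSqZeroExt.algebraMap_eq_inl,
        TrivSqZeroExt.fst_zero] at hfst
      rcases mul_eq_zero.mp hfst with h1 | h2
      · norm_num at h1
      · exact h h2
  · -- B/(x) is not a domain
    intro hdom
    set J := Ideal.span {x} with hJ
    set π : (MvPolynomial (Fin 3) ℂ ⧸ (Ideal.span {G})) →+* ((MvPolynomial (Fin 3) ℂ ⧸ (Ideal.span {G})) ⧸ J) := Ideal.Quotient.mk J with hπ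
    set t := π (Ideal.Quotient.mk (Ideal.span {G}) (X 2)) with ht
    have hπx : π x = 0 := by
      rw [Ideal.Quotient.eq_zero_iff_mem]
      exact Ideal.subset_span rfl
    have htsq : t * t = 0 := by
      have hmkG : Ideal.Quotient.mk (Ideal.span {G}) G = 0 := by
        rw [Ideal.Quotient.eq_zero_iff_mem]
        exact Ideal.subset_span rfl
      have hX2sq : Ideal.Quotient.mk (Ideal.span {G}) (X 2 ^ 2) =
          x ^ 2 * Ideal.Quotient.mk (Ideal.span {G}) (X 1) := by
        have : (X 2 : MvPolynomial (Fin 3) ℂ) ^ 2 = X 0 ^ 2 * X 1 - G := by rw [hG]; ring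
        rw [this, map_sub, hmkG, sub_zero, hx, map_mul, map_pow]
      rw [ht, ← map_mul, ← map_mul, ← sq, hX2sq, map_mul, map_pow, hπx]
      ring
    have htne : t ≠ 0 := by
      set g : Fin 3 → DualNumber ℂ := ![0, 0, DualNumber.eps] with hg
      have hψG : (aeval g) G = 0 := by
        rw [hG]
        simp only [map_sub, map_mul, map_pow, aeval_X, hg, Matrix.cons_val_zero,
          Matrix.cons_val_one, Matrix.head_cons, Matrix.cons_val_two, Matrix.tail_cons]
        have heps2 : (DualNumber.eps : DualNumber ℂ) ^ 2 = 0 := by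
          rw [sq]; exact DualNumber.eps_mul_eps
        rw [heps2]
        ring
      have hvan1 : ∀ r ∈ (Ideal.span {G}), (aeval g : MvPolynomial (Fin 3) ℂ →ₐ[ℂ] DualNumber ℂ) r = 0 := by
        intro r hr
        rw [Ideal.mem_span_singleton'] at hr
        obtain ⟨a, rfl⟩ := hr
        rw [map_mul, hψG, mul_zero]
      set ψ1 : (MvPolynomial (Fin 3) ℂ ⧸ (Ideal.span {G})) →+* DualNumber ℂ :=
        Ideal.Quotient.lift (Ideal.span {G}) (aeval g : MvPolynomial (Fin 3) ℂ →ₐ[ℂ] DualNumber ℂ).toRingHom hvan1 with hψ1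
      have hψ1x : ψ1 x = 0 := by
        rw [hx]
        show aeval g (X 0) = 0
        simp [hg]
      have hvan2 : ∀ b ∈ J, ψ1 b = 0 := by
        intro b hb
        rw [Ideal.mem_span_singleton'] at hb
        obtain ⟨c, rfl⟩ := hb
        rw [map_mul, hψ1x, mul_zero]
      set ψ : ((MvPolynomial (Fin 3) ℂ ⧸ (Ideal.span {G})) ⧸ J) →+* DualNumber ℂ := Ideal.Quotient.lift J ψ1 hvan2 with hψ
      intro h0
      have : ψ t = 0 := by rw [h0, map_zero]
      have hψt : ψ t = DualNumber.eps := by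
        rw [ht]
        show ψ1 (Ideal.Quotient.mk (Ideal.span {G}) (X 2)) = _
        show aeval g (X 2) = _
        simp [hg]
      rw [hψt] at this
      have hsnd := congrArg TrivSqZeroExt.snd this
      simp only [DualNumber.eps, TrivSqZeroExt.snd_inr, TrivSqZeroExt.snd_zero] at hsnd
      exact one_ne_zero hsnd
    exact htne (by have := hdom; exact (mul_self_eq_zero (M₀ := (MvPolynomial (Fin 3) ℂ ⧸ Ideal.span {G}) ⧸ J) (a := t)).mp htsq)
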